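/- Let G be a connected locally finite graph, let V_0 be a finite subset of its vertices inducing a connected subgraph G_0, and let v_0 be a vertex in V_0. Let bar(G_0) denote the closure of G_0 in G, i.e. the subgraph induced on V_0 together with all vertices of G having a neighbour in V_0, and let |bar(G_0)| be its number of edges. For v in V_0 let sigma_v^out be the number of neighbours of v in G outside V_0. Define C_{G,G_0}(n; v_0) = sigma_{v_0} * sum over vertices v in V_0 with sigma_v^out > 0 of sigma_v^{-1} * sigma_v^out * (sum over all walks omega from v_0 to v of length at most n whose vertices all lie in V_0 and which do not return to v_0 after the initial step of p_G(omega)). Then for every positive integer n, Q_G(n; v_0, v_0) >= sigma_{v_0} * ( 2|bar(G_0)|/(n+1) + C_{G,G_0}(n; v_0) )^{-1}. -/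

import Mathlib

open scoped ENNReal

variable {V : Type*}

/-- Weight of a walk: product over all vertices except the last of the inverse degree. -/
noncomputable def wgt (G : SimpleGraph V) [G.LocallyFinite] {v u : V} (p : G.Walk v u) : ℝ≥0∞ :=
  (p.support.dropLast.map fun x => ((G.degree x : ℝ≥0∞))⁻¹).prod

/-- Cumulative probability: sum of weights of walks from `v` to `u` of length at most `n`. -/
noncomputable def Q (G : SimpleGraph V) [G.LocallyFinite] (n : ℕ) (v u : V) : ℝ≥0∞ :=
  ∑' ω : {ω : G.Walk v u // ω.length ≤ n}, wgt G ω.1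

/-- Vertex set of the closure `bar G₀` of the subgraph induced on `V₀`: the vertices of `V₀`
together with all vertices of `G` having a neighbour in `V₀`. -/
def closureSet (G : SimpleGraph V) (V₀ : Set V) : Set V :=
  V₀ ∪ {x | ∃ v ∈ V₀, G.Adj v x}

/-- Number of edges of the subgraph of `G` induced on the closure of `V₀`. -/
noncomputable def closureEdgeCount (G : SimpleGraph V) (V₀ : Set V) : ℕ :=
  {e ∈ G.edgeSet | ∀ x ∈ e, x ∈ closureSet G V₀}.ncard

/-- The truncated conductance `C_{G,G₀}(n; v₀)`: `σ_{v₀}` times the probability that a walk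
started at `v₀` reaches the inner boundary of `G₀` within `n` steps, staying inside `V₀`,
without returning to `v₀`. -/
noncomputable def conductance (G : SimpleGraph V) [G.LocallyFinite] (V₀ : Set V) (n : ℕ)
    (v₀ : V) : ℝ≥0∞ :=
  (G.degree v₀ : ℝ≥0∞) *
    ∑' v : {v : V // v ∈ V₀ ∧ 0 < {x | G.Adj v x ∧ x ∉ V₀}.ncard},
      ((G.degree (v : V) : ℝ≥0∞))⁻¹ * ({x | G.Adj (v : V) x ∧ x ∉ V₀}.ncard : ℝ≥0∞) *
        ∑' ω : {ω : G.Walk v₀ (v : V) //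
            ω.length ≤ n ∧ (∀ x ∈ ω.support, x ∈ V₀) ∧ v₀ ∉ ω.support.tail},
          wgt G ω.1


section Aux

open SimpleGraph Walk

variable {G : SimpleGraph V} [G.LocallyFinite]

set_option linter.unusedSectionVars false

@[simp] lemma wgt_nil {v : V} : wgt G (Walk.nil : G.Walk v v) = 1 := by
  simp [wgt]

@[simp] lemma wgt_cons {v x u : V} (h : G.Adj v x) (p : G.Walk x u) :
    wgt G (Walk.cons h p) = ((G.degree v : ℝ≥0∞))⁻¹ * wgt G p := by
  have hne : p.support ≠ [] := p.support_ne_nil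
  simp [wgt, Walk.support_cons h p, List.dropLast_cons_of_ne_nil hne]

lemma wgt_append {v u w : V} (p : G.Walk v u) (q : G.Walk u w) :
    wgt G (p.append q) = wgt G p * wgt G q := by
  induction p with
  | nil => simp
  | cons h p ih => simp [Walk.cons_append, ih, mul_assoc]

/-- Walks of length `m` from `v`, together with their endpoint. -/
abbrev WL (G : SimpleGraph V) (v : V) (m : ℕ) : Type _ :=
  Σ u : V, {p : G.Walk v u // p.length = m}

noncomputable def SS (G : SimpleGraph V) [G.LocallyFinite] (v : V) (m : ℕ) : ℝ≥0∞ :=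
  ∑' x : WL G v m, wgt G x.2.1

def stepEquiv (v : V) (m : ℕ) : WL G v (m + 1) ≃ Σ x : G.neighborSet v, WL G x m where
  toFun z := match z with
    | ⟨_, ⟨Walk.cons h p, hp⟩⟩ => ⟨⟨_, h⟩, _, p, by simpa using hp⟩
  invFun z := ⟨z.2.1, Walk.cons z.1.2 z.2.2.1, by exact congrArg (· + 1) z.2.2.2⟩
  left_inv := by
    rintro ⟨u, p, hp⟩
    match p, hp with
    | Walk.cons h p, hp => rfl
  right_inv := by rintro ⟨⟨x, h⟩, u, p, hp⟩; rfl

lemma SS_zero (v : V) : SS G v 0 = 1 := by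
  have huniq : ∀ z : WL G v 0, z = ⟨v, Walk.nil, rfl⟩ := by
    rintro ⟨u, p, hp⟩
    have : v = u := Walk.eq_of_length_eq_zero hp
    subst this
    have : p = Walk.nil := Walk.eq_nil_iff_nil.mpr (Walk.length_eq_zero_iff.mp hp)
    subst this; rfl
  rw [SS, tsum_eq_single (⟨v, Walk.nil, rfl⟩ : WL G v 0)]
  · simp
  · intro b hb; exact absurd (huniq b) hb

lemma SS_succ (v : V) (m : ℕ) :
    SS G v (m + 1) = ((G.degree v : ℝ≥0∞))⁻¹ * ∑' x : G.neighborSet v, SS G x m := by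
  have key := ((stepEquiv (G := G) v m).symm.tsum_eq
    (f := fun x : WL G v (m + 1) => wgt G x.2.1))
  rw [SS, ← key]
  have : ∀ z : Σ x : G.neighborSet v, WL G (x : V) m,
      wgt G ((stepEquiv (G := G) v m).symm z).2.1
        = ((G.degree v : ℝ≥0∞))⁻¹ * wgt G z.2.2.1 := by
    rintro ⟨⟨x, h⟩, u, p, hp⟩
    exact wgt_cons _ _
  simp only [this]
  rw [ENNReal.tsum_sigma']
  simp only [ENNReal.tsum_mul_left]
  rfl

lemma tsum_one_fintype (α : Type*) [Fintype α] : (∑' _ : α, (1 : ℝ≥0∞)) = Fintype.card α := by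
  rw [tsum_fintype]; simp

lemma SS_eq_one (hdeg : ∀ x : V, 0 < G.degree x) (m : ℕ) (v : V) : SS G v m = 1 := by
  induction m generalizing v with
  | zero => exact SS_zero v
  | succ m ih =>
    rw [SS_succ v m]
    simp only [ih]
    rw [tsum_one_fintype, SimpleGraph.card_neighborSet_eq_degree]
    exact ENNReal.inv_mul_cancel (by exact_mod_cast (hdeg v).ne') (by simp)

lemma wgt_full {v u : V} (p : G.Walk v u) :
    wgt G p * ((G.degree u : ℝ≥0∞))⁻¹
      = (p.support.map fun x => ((G.degree x : ℝ≥0∞))⁻¹).prod := by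
  induction p with
  | nil => simp [wgt]
  | cons h p ih => simp [mul_assoc, ih]

lemma wgt_reverse {v u : V} (p : G.Walk v u) :
    wgt G p * ((G.degree u : ℝ≥0∞))⁻¹ = wgt G p.reverse * ((G.degree v : ℝ≥0∞))⁻¹ := by
  rw [wgt_full, wgt_full, Walk.support_reverse, List.map_reverse, List.prod_reverse]

lemma wgt_eq_of_reverse (hdeg : ∀ x : V, 0 < G.degree x) {v u : V} (p : G.Walk v u) :
    wgt G p = (G.degree u : ℝ≥0∞) * ((G.degree v : ℝ≥0∞))⁻¹ * wgt G p.reverse := by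
  have hu0 : ((G.degree u : ℝ≥0∞)) ≠ 0 := by exact_mod_cast (hdeg u).ne'
  have hut : ((G.degree u : ℝ≥0∞)) ≠ ∞ := by simp
  calc wgt G p = wgt G p * ((G.degree u : ℝ≥0∞))⁻¹ * (G.degree u : ℝ≥0∞) := by
        rw [mul_assoc, ENNReal.inv_mul_cancel hu0 hut, mul_one]
    _ = wgt G p.reverse * ((G.degree v : ℝ≥0∞))⁻¹ * (G.degree u : ℝ≥0∞) := by
        rw [wgt_reverse]
    _ = (G.degree u : ℝ≥0∞) * ((G.degree v : ℝ≥0∞))⁻¹ * wgt G p.reverse := by ring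

section FP

variable (G) (v₀ : V)

/-- First-passage walks: walks from `u` to `v₀` meeting `v₀` only at the very end. -/
abbrev FP (u : V) (j : ℕ) : Type _ :=
  {q : G.Walk u v₀ // q.length = j ∧ v₀ ∉ q.support.dropLast}

noncomputable def fps (u : V) (j : ℕ) : ℝ≥0∞ := ∑' q : FP G v₀ u j, wgt G q.1

variable {G v₀}

lemma fps_self_zero : fps G v₀ v₀ 0 = 1 := by
  rw [fps, tsum_eq_single (⟨Walk.nil, rfl, by simp⟩ : FP G v₀ v₀ 0)]
  · simp
  · rintro ⟨q, hq, hq'⟩ hb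
    exact absurd (Subtype.ext (Walk.eq_nil_iff_nil.mpr (Walk.length_eq_zero_iff.mp hq))) hb

lemma fps_self_succ (j : ℕ) : fps G v₀ v₀ (j + 1) = 0 := by
  rw [fps]
  convert tsum_empty
  rw [← not_nonempty_iff]
  rintro ⟨q, hq, hq'⟩
  apply hq'
  have h2 : q.support = v₀ :: q.support.tail := q.support_eq_cons
  have ht : q.support.tail ≠ [] := by
    intro h
    have := congrArg List.length h2
    rw [Walk.length_support, h] at this
    simp [hq] at this
  rw [h2, List.dropLast_cons_of_ne_nil ht]
  exact List.mem_cons_self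

lemma fps_ne_zero (u : V) (hu : u ≠ v₀) : fps G v₀ u 0 = 0 := by
  rw [fps]
  convert tsum_empty
  rw [← not_nonempty_iff]
  rintro ⟨q, hq, hq'⟩
  exact hu (Walk.eq_of_length_eq_zero hq)

def fpStepEquiv (u : V) (hu : u ≠ v₀) (j : ℕ) :
    FP G v₀ u (j + 1) ≃ Σ x : G.neighborSet u, FP G v₀ x j where
  toFun z := match z with
    | ⟨Walk.cons h q, hq⟩ => ⟨⟨_, h⟩, q, by
        obtain ⟨h1, h2⟩ := hq
        refine ⟨by simpa using h1, fun hm => h2 ?_⟩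
        rw [Walk.support_cons, List.dropLast_cons_of_ne_nil q.support_ne_nil]
        exact List.mem_cons_of_mem _ hm⟩
  invFun z := ⟨Walk.cons z.1.2 z.2.1, by exact congrArg (· + 1) z.2.2.1, by
      show v₀ ∉ (u :: z.2.1.support).dropLast
      rw [List.dropLast_cons_of_ne_nil z.2.1.support_ne_nil]
      intro hmem
      rcases List.mem_cons.mp hmem with h | h
      · exact hu h.symm
      · exact z.2.2.2 h⟩
  left_inv := by
    rintro ⟨q, hq⟩
    match q, hq with
    | Walk.cons h q, hq => rfl
  right_inv := by rintro ⟨⟨x, h⟩, q, hq⟩; rfl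

end FP

lemma fps_succ {v₀ : V} (u : V) (hu : u ≠ v₀) (j : ℕ) :
    fps G v₀ u (j + 1) = ((G.degree u : ℝ≥0∞))⁻¹ * ∑' x : G.neighborSet u, fps G v₀ x j := by
  have key := ((fpStepEquiv (G := G) u hu j).symm.tsum_eq
    (f := fun q : FP G v₀ u (j + 1) => wgt G q.1))
  rw [fps, ← key]
  have : ∀ z : Σ x : G.neighborSet u, FP G v₀ (x : V) j,
      wgt G ((fpStepEquiv (G := G) u hu j).symm z).1
        = ((G.degree u : ℝ≥0∞))⁻¹ * wgt G z.2.1 := by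
    rintro ⟨⟨x, h⟩, q, hq⟩
    exact wgt_cons _ _
  simp only [this]
  rw [ENNReal.tsum_sigma']
  simp only [ENNReal.tsum_mul_left]
  rfl

lemma fps_cum (hdeg : ∀ x : V, 0 < G.degree x) {v₀ : V} (n : ℕ) (u : V) :
    ∑ j ∈ Finset.range (n + 1), fps G v₀ u j ≤ 1 := by
  induction n generalizing u with
  | zero =>
    simp only [Nat.zero_add, Finset.sum_range_one]
    by_cases hu : u = v₀
    · subst hu; rw [fps_self_zero]
    · rw [fps_ne_zero u hu]; exact zero_le_one
  | succ n ih =>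
    by_cases hu : u = v₀
    · subst hu
      rw [Finset.sum_range_succ']
      simp [fps_self_succ, fps_self_zero]
    · rw [Finset.sum_range_succ']
      rw [fps_ne_zero u hu, add_zero]
      have : ∀ j, fps G v₀ u (j + 1)
          = ((G.degree u : ℝ≥0∞))⁻¹ * ∑' x : G.neighborSet u, fps G v₀ x j :=
        fps_succ u hu
      simp only [this]
      rw [← Finset.mul_sum]
      have swap : ∑ j ∈ Finset.range (n + 1), ∑' x : G.neighborSet u, fps G v₀ x j
          = ∑' x : G.neighborSet u, ∑ j ∈ Finset.range (n + 1), fps G v₀ x j := by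
        exact (Summable.tsum_finsetSum fun _ _ => ENNReal.summable).symm
      rw [swap]
      calc ((G.degree u : ℝ≥0∞))⁻¹ * ∑' x : G.neighborSet u,
            ∑ j ∈ Finset.range (n + 1), fps G v₀ (x : V) j
          ≤ ((G.degree u : ℝ≥0∞))⁻¹ * ∑' _ : G.neighborSet u, (1 : ℝ≥0∞) :=
            mul_le_mul_right (ENNReal.tsum_le_tsum fun x : G.neighborSet u => ih (x : V)) _
        _ = 1 := by
            rw [tsum_one_fintype, SimpleGraph.card_neighborSet_eq_degree]
            exact ENNReal.inv_mul_cancel (by exact_mod_cast (hdeg u).ne') (by simp)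

lemma dropLast_reverse' {α : Type*} (l : List α) : l.reverse.dropLast = l.tail.reverse := by
  have h := List.tail_reverse (l := l.reverse)
  rw [List.reverse_reverse] at h
  rw [h, List.reverse_reverse]

section Main

variable (G) (V₀ : Set V) (v₀ : V)

/-- Walks from `v₀` to `u` staying in `V₀` and avoiding `v₀` after the start. -/
abbrev AIn (u : V) (j : ℕ) : Type _ :=
  {p : G.Walk v₀ u // p.length = j ∧ (∀ x ∈ p.support, x ∈ V₀) ∧ v₀ ∉ p.support.tail}

noncomputable def ainsum (u : V) (j : ℕ) : ℝ≥0∞ := ∑' p : AIn G V₀ v₀ u j, wgt G p.1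

variable {G V₀ v₀}

lemma ainsum_le_fps (hdeg : ∀ x : V, 0 < G.degree x) (u : V) (j : ℕ) :
    ainsum G V₀ v₀ u j ≤ (G.degree u : ℝ≥0∞) * ((G.degree v₀ : ℝ≥0∞))⁻¹ * fps G v₀ u j := by
  rw [ainsum]
  have hrw : ∀ p : AIn G V₀ v₀ u j,
      wgt G p.1 = (G.degree u : ℝ≥0∞) * ((G.degree v₀ : ℝ≥0∞))⁻¹ * wgt G p.1.reverse :=
    fun p => wgt_eq_of_reverse hdeg p.1
  simp only [hrw]
  rw [ENNReal.tsum_mul_left]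
  refine mul_le_mul_right ?_ _
  have key := ENNReal.tsum_comp_le_tsum_of_injective (f := fun p : AIn G V₀ v₀ u j =>
      (⟨p.1.reverse, by simp [p.2.1], by
        rw [Walk.support_reverse, dropLast_reverse']
        simpa using p.2.2.2⟩ : FP G v₀ u j))
    (by
      rintro ⟨p, hp⟩ ⟨q, hq⟩ h
      simpa using congrArg (fun z : FP G v₀ u j => z.1.reverse) h)
    (fun q => wgt G q.1)
  exact key

lemma ainsum_eq_zero (u : V) (hu : u ∉ V₀) (j : ℕ) : ainsum G V₀ v₀ u j = 0 := by
  rw [ainsum]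
  convert tsum_empty
  rw [← not_nonempty_iff]
  rintro ⟨p, hp, hin, hav⟩
  exact hu (hin u p.end_mem_support)

lemma ain_total (hdeg : ∀ x : V, 0 < G.degree x) (hfin : V₀.Finite) (n : ℕ) :
    ∑ j ∈ Finset.range (n + 1), ∑' u : V, ainsum G V₀ v₀ u j
      ≤ ((G.degree v₀ : ℝ≥0∞))⁻¹ * ∑ u ∈ hfin.toFinset, (G.degree u : ℝ≥0∞) := by
  rw [(Summable.tsum_finsetSum (fun (j : ℕ) (_ : j ∈ Finset.range (n+1)) =>
    (ENNReal.summable : Summable fun u : V => ainsum G V₀ v₀ u j))).symm]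
  have hle : ∀ u : V, ∑ j ∈ Finset.range (n + 1), ainsum G V₀ v₀ u j
      ≤ Set.indicator V₀ (fun u => (G.degree u : ℝ≥0∞) * ((G.degree v₀ : ℝ≥0∞))⁻¹) u := by
    intro u
    by_cases hu : u ∈ V₀
    · rw [Set.indicator_of_mem hu]
      calc ∑ j ∈ Finset.range (n + 1), ainsum G V₀ v₀ u j
          ≤ ∑ j ∈ Finset.range (n + 1),
            (G.degree u : ℝ≥0∞) * ((G.degree v₀ : ℝ≥0∞))⁻¹ * fps G v₀ u j :=
            Finset.sum_le_sum fun j _ => ainsum_le_fps hdeg u j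
        _ = (G.degree u : ℝ≥0∞) * ((G.degree v₀ : ℝ≥0∞))⁻¹
              * ∑ j ∈ Finset.range (n + 1), fps G v₀ u j := by rw [Finset.mul_sum]
        _ ≤ (G.degree u : ℝ≥0∞) * ((G.degree v₀ : ℝ≥0∞))⁻¹ * 1 :=
            mul_le_mul_right (fps_cum hdeg n u) _
        _ = _ := mul_one _
    · rw [Set.indicator_of_notMem hu]
      simp [ainsum_eq_zero u hu]
  refine le_trans (ENNReal.tsum_le_tsum hle) ?_
  rw [tsum_eq_sum (s := hfin.toFinset)
    (fun u hu => Set.indicator_of_notMem (by simpa using hu) _)]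
  rw [Finset.mul_sum]
  refine le_of_eq (Finset.sum_congr rfl fun u hu => ?_)
  rw [Set.indicator_of_mem (by simpa using hu)]
  ring

end Main

lemma exists_exit {V₀ : Set V} :
    ∀ {w u : V} (ω : G.Walk w u), w ∈ V₀ → ¬(∀ x ∈ ω.support, x ∈ V₀) →
    ∃ (v x : V) (hadj : G.Adj v x) (p : G.Walk w v) (q : G.Walk x u),
      ω = p.append (Walk.cons hadj q) ∧ (∀ y ∈ p.support, y ∈ V₀) ∧ x ∉ V₀ := by
  intro w u ω
  induction ω with
  | nil => intro hw h; exact absurd (by simpa using hw) h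
  | @cons a b c hadj p ih =>
    intro hw h
    by_cases hb : b ∈ V₀
    · have h' : ¬(∀ x ∈ p.support, x ∈ V₀) := by
        intro hall
        apply h
        intro x hx
        rcases List.mem_cons.mp (by simpa using hx) with h1 | h1
        · exact h1 ▸ hw
        · exact hall x h1
      obtain ⟨v, x, hadj', p', q, heq, hp', hx⟩ := ih hb h'
      refine ⟨v, x, hadj', Walk.cons hadj p', q, ?_, ?_, hx⟩
      · rw [Walk.cons_append, heq]
      · intro y hy
        rcases List.mem_cons.mp (by simpa using hy) with h1 | h1
        · exact h1 ▸ hw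
        · exact hp' y h1
    · exact ⟨a, b, hadj, Walk.nil, p, by rw [Walk.nil_append], by simp [hw], hb⟩

lemma exists_lastvisit {v₀ : V} :
    ∀ (m : ℕ) {u : V} (ω : G.Walk v₀ u), ω.length ≤ m →
    ∃ (ρ : G.Walk v₀ v₀) (t : G.Walk v₀ u),
      ω = ρ.append t ∧ v₀ ∉ t.support.tail := by
  haveI := Classical.decEq V
  intro m
  induction m with
  | zero =>
    intro u ω hlen
    refine ⟨Walk.nil, ω, (Walk.nil_append ω).symm, ?_⟩
    have h1 : ω.support.length = ω.length + 1 := Walk.length_support ω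
    have h2 : ω.support = v₀ :: ω.support.tail := ω.support_eq_cons
    have h3 : ω.support.tail.length = 0 := by
      have h4 := congrArg List.length h2
      rw [h1, List.length_cons] at h4
      omega
    rw [List.length_eq_zero_iff.mp h3]
    simp
  | succ m ih =>
    intro u ω hlen
    by_cases hmem : v₀ ∈ ω.support.tail
    · cases ω with
      | nil => simp at hmem
      | @cons _ b _ hadj ω' =>
        have hmem' : v₀ ∈ ω'.support := by simpa using hmem
        have hspec : (ω'.takeUntil v₀ hmem').append (ω'.dropUntil v₀ hmem') = ω' :=
          ω'.take_spec hmem'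
        have hlen'' : (ω'.dropUntil v₀ hmem').length ≤ m := by
          have h1 := Walk.length_dropUntil_le ω' hmem'
          have h2 : (Walk.cons hadj ω').length = ω'.length + 1 := Walk.length_cons _ _
          omega
        obtain ⟨ρ', t, heq, hav⟩ := ih (ω'.dropUntil v₀ hmem') hlen''
        refine ⟨(Walk.cons hadj (ω'.takeUntil v₀ hmem')).append ρ', t, ?_, hav⟩
        conv_rhs => rw [Walk.cons_append, Walk.cons_append, ← Walk.append_assoc, ← heq, hspec]
    · exact ⟨Walk.nil, ω, (Walk.nil_append ω).symm, hmem⟩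

section Exit

variable (G) (V₀ : Set V) (v₀ : V) (n : ℕ)

abbrev Bd : Type _ := {v : V // v ∈ V₀ ∧ 0 < {x | G.Adj v x ∧ x ∉ V₀}.ncard}

abbrev Cnd (v : V) : Type _ :=
  {ω : G.Walk v₀ v // ω.length ≤ n ∧ (∀ x ∈ ω.support, x ∈ V₀) ∧ v₀ ∉ ω.support.tail}

noncomputable def cndX : ℝ≥0∞ :=
  ∑' v : Bd G V₀,
    ((G.degree (v : V) : ℝ≥0∞))⁻¹ * ({x | G.Adj (v : V) x ∧ x ∉ V₀}.ncard : ℝ≥0∞) *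
      ∑' ω : Cnd G V₀ v₀ n (v : V), wgt G ω.1

abbrev AOutT (j : ℕ) : Type _ :=
  Σ u : V, {p : G.Walk v₀ u // p.length = j ∧ v₀ ∉ p.support.tail
    ∧ ¬(∀ x ∈ p.support, x ∈ V₀)}

noncomputable def aoutsum (j : ℕ) : ℝ≥0∞ := ∑' z : AOutT G V₀ v₀ j, wgt G z.2.1

abbrev TJ (j : ℕ) : Type _ :=
  Σ (v : Bd G V₀) (p : Cnd G V₀ v₀ n (v : V)) (x : {x : V // G.Adj (v : V) x ∧ x ∉ V₀}),
    WL G (x : V) (j - p.1.length - 1)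

def RJ (j : ℕ) : TJ G V₀ v₀ n j → Σ u : V, G.Walk v₀ u :=
  fun t => ⟨t.2.2.2.1, t.2.1.1.append (Walk.cons t.2.2.1.2.1 t.2.2.2.2.1)⟩

variable {G V₀ v₀ n}

lemma wgt_RJ (j : ℕ) (t : TJ G V₀ v₀ n j) :
    wgt G (RJ G V₀ v₀ n j t).2
      = wgt G t.2.1.1 * ((G.degree (t.1 : V) : ℝ≥0∞))⁻¹ * wgt G t.2.2.2.2.1 := by
  obtain ⟨v, p, x, u, q⟩ := t
  show wgt G (p.1.append (Walk.cons x.2.1 q.1)) = _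
  rw [wgt_append, wgt_cons, mul_assoc]

lemma exit_decomp (hv₀ : v₀ ∈ V₀) {j : ℕ} (hj : j ≤ n) (z : AOutT G V₀ v₀ j) :
    ∃ t : TJ G V₀ v₀ n j, RJ G V₀ v₀ n j t = ⟨z.1, z.2.1⟩ := by
  obtain ⟨u, ω, hlen, hav, hout⟩ := z
  obtain ⟨v, x, hadj, p, q, heq, hp, hx⟩ := exists_exit ω hv₀ hout
  have hvV : v ∈ V₀ := hp v p.end_mem_support
  have hfinS : {y | G.Adj v y ∧ y ∉ V₀}.Finite :=
    Set.Finite.subset (G.neighborSet v).toFinite fun y hy => hy.1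
  have hpos : 0 < {y | G.Adj v y ∧ y ∉ V₀}.ncard :=
    (Set.ncard_pos hfinS).mpr ⟨x, hadj, hx⟩
  have hlength : ω.length = p.length + q.length + 1 := by
    rw [heq, Walk.length_append, Walk.length_cons]; omega
  have hplen : p.length ≤ n := by omega
  have hpav : v₀ ∉ p.support.tail := by
    intro hmem
    apply hav
    rw [heq, Walk.support_append, List.tail_append_of_ne_nil p.support_ne_nil]
    exact List.mem_append_left _ hmem
  refine ⟨⟨⟨v, hvV, hpos⟩, ⟨p, hplen, hp, hpav⟩, ⟨x, hadj, hx⟩, u, q, by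
    show q.length = j - p.length - 1
    omega⟩, ?_⟩
  show (⟨u, p.append (Walk.cons hadj q)⟩ : Σ u : V, G.Walk v₀ u) = ⟨u, ω⟩
  rw [heq]

end Exit

lemma sigma_walk_ext {v₀ : V} {P : ∀ u : V, G.Walk v₀ u → Prop}
    {z w : Σ u : V, {p : G.Walk v₀ u // P u p}}
    (h : (⟨z.1, z.2.1⟩ : Σ u : V, G.Walk v₀ u) = ⟨w.1, w.2.1⟩) : z = w := by
  obtain ⟨u, p, hp⟩ := z
  obtain ⟨u', p', hp'⟩ := w
  simp only at h
  injection h with h1 h2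
  subst h1
  have h3 : p = p' := eq_of_heq h2
  subst h3
  rfl

lemma tsum_one_subtype' (P : V → Prop) (hS : {x | P x}.Finite) :
    (∑' _ : {x : V // P x}, (1 : ℝ≥0∞)) = ({x | P x}.ncard : ℝ≥0∞) := by
  haveI F1 : Fintype ↥{x | P x} := hS.fintype
  haveI : Fintype {x : V // P x} := F1
  rw [tsum_one_fintype, ← Nat.card_coe_set_eq, Nat.card_eq_fintype_card]
  congr 1
  exact Fintype.card_congr (Equiv.refl _)

lemma aoutsum_le (hdeg : ∀ x : V, 0 < G.degree x) {V₀ : Set V} {v₀ : V} {n : ℕ}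
    (hv₀ : v₀ ∈ V₀) {j : ℕ} (hj : j ≤ n) :
    aoutsum G V₀ v₀ j ≤ cndX G V₀ v₀ n := by
  classical
  let F : (Σ u : V, G.Walk v₀ u) → ℝ≥0∞ := fun s => wgt G s.2
  let gT : TJ G V₀ v₀ n j → ℝ≥0∞ := fun t =>
    wgt G t.2.1.1 * ((G.degree (t.1 : V) : ℝ≥0∞))⁻¹ * wgt G t.2.2.2.2.1
  let e : AOutT G V₀ v₀ j → TJ G V₀ v₀ n j := fun z => (exit_decomp hv₀ hj z).choose
  have he : ∀ z, RJ G V₀ v₀ n j (e z) = ⟨z.1, z.2.1⟩ :=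
    fun z => (exit_decomp hv₀ hj z).choose_spec
  have hinj : Function.Injective e := by
    intro z₁ z₂ h
    apply sigma_walk_ext
    rw [← he z₁, ← he z₂, h]
  have hwgt : ∀ z : AOutT G V₀ v₀ j, wgt G z.2.1 = gT (e z) := by
    intro z
    calc wgt G z.2.1 = F ⟨z.1, z.2.1⟩ := rfl
      _ = F (RJ G V₀ v₀ n j (e z)) := by rw [he z]
      _ = gT (e z) := wgt_RJ j (e z)
  calc aoutsum G V₀ v₀ j
      = ∑' z : AOutT G V₀ v₀ j, gT (e z) := by rw [aoutsum]; exact tsum_congr hwgt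
    _ ≤ ∑' t : TJ G V₀ v₀ n j, gT t := ENNReal.tsum_comp_le_tsum_of_injective hinj _
    _ = cndX G V₀ v₀ n := by
        rw [cndX, ENNReal.tsum_sigma']
        refine tsum_congr fun v => ?_
        rw [ENNReal.tsum_sigma']
        have hfinS : {y | G.Adj (v : V) y ∧ y ∉ V₀}.Finite :=
          Set.Finite.subset (G.neighborSet (v : V)).toFinite fun y hy => hy.1
        have inner : ∀ p : Cnd G V₀ v₀ n (v : V),
            (∑' w : (Σ x : {x : V // G.Adj (v : V) x ∧ x ∉ V₀},
                WL G (x : V) (j - p.1.length - 1)),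
              wgt G p.1 * ((G.degree (v : V) : ℝ≥0∞))⁻¹ * wgt G w.2.2.1)
            = wgt G p.1 * ((G.degree (v : V) : ℝ≥0∞))⁻¹
                * ({x | G.Adj (v : V) x ∧ x ∉ V₀}.ncard : ℝ≥0∞) := by
          intro p
          rw [ENNReal.tsum_sigma']
          have h1 : ∀ x : {x : V // G.Adj (v : V) x ∧ x ∉ V₀},
              (∑' w : WL G (x : V) (j - p.1.length - 1),
                wgt G p.1 * ((G.degree (v : V) : ℝ≥0∞))⁻¹ * wgt G w.2.1)
              = wgt G p.1 * ((G.degree (v : V) : ℝ≥0∞))⁻¹ := by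
            intro x
            rw [ENNReal.tsum_mul_left]
            have : SS G (x : V) (j - p.1.length - 1) = 1 := SS_eq_one hdeg _ _
            rw [SS] at this
            rw [this, mul_one]
          calc _ = ∑' _ : {x : V // G.Adj (v : V) x ∧ x ∉ V₀},
                wgt G p.1 * ((G.degree (v : V) : ℝ≥0∞))⁻¹ := tsum_congr h1
            _ = _ := by
                rw [← tsum_one_subtype' _ hfinS, ← ENNReal.tsum_mul_left]
                exact tsum_congr fun x => by rw [mul_one]
        calc (∑' (p : Cnd G V₀ v₀ n (v : V)) (w : Σ x : {x : V // G.Adj (v : V) x ∧ x ∉ V₀},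
                WL G (x : V) (j - p.1.length - 1)),
              wgt G p.1 * ((G.degree (v : V) : ℝ≥0∞))⁻¹ * wgt G w.2.2.1)
            = ∑' p : Cnd G V₀ v₀ n (v : V),
                wgt G p.1 * ((G.degree (v : V) : ℝ≥0∞))⁻¹
                  * ({x | G.Adj (v : V) x ∧ x ∉ V₀}.ncard : ℝ≥0∞) := tsum_congr inner
          _ = _ := by
              rw [← ENNReal.tsum_mul_left]
              exact tsum_congr fun p => by ring

section Conv

variable (G) (v₀ : V) (n : ℕ)

noncomputable def pk (k : ℕ) : ℝ≥0∞ := ∑' ρ : {ρ : G.Walk v₀ v₀ // ρ.length = k}, wgt G ρ.1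

abbrev AWT (m : ℕ) : Type _ := Σ u : V, {t : G.Walk v₀ u // t.length = m ∧ v₀ ∉ t.support.tail}

noncomputable def aA (m : ℕ) : ℝ≥0∞ := ∑' z : AWT G v₀ m, wgt G z.2.1

abbrev TT (m : ℕ) : Type _ :=
  Σ k : Fin (m + 1), {ρ : G.Walk v₀ v₀ // ρ.length = (k : ℕ)} × AWT G v₀ (m - (k : ℕ))

def R2 (m : ℕ) : TT G v₀ m → WL G v₀ m := fun t =>
  ⟨t.2.2.1, t.2.1.1.append t.2.2.2.1, by
    rw [Walk.length_append, t.2.1.2, t.2.2.2.2.1]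
    have := t.1.2
    omega⟩

variable {G v₀ n}

lemma R2_surj (m : ℕ) : Function.Surjective (R2 G v₀ m) := by
  rintro ⟨u, ω, hlen⟩
  obtain ⟨ρ, t, heq, hav⟩ := exists_lastvisit m ω (le_of_eq hlen)
  have hl : ρ.length + t.length = m := by
    rw [← hlen, heq, Walk.length_append]
  subst heq
  refine ⟨⟨⟨ρ.length, by omega⟩, ⟨ρ, rfl⟩, ⟨u, t, by show t.length = m - ρ.length; omega, hav⟩⟩, rfl⟩

lemma one_le_conv (hdeg : ∀ x : V, 0 < G.degree x) (m : ℕ) :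
    1 ≤ ∑ k ∈ Finset.range (m + 1), pk G v₀ k * aA G v₀ (m - k) := by
  have h1 : (1 : ℝ≥0∞) = SS G v₀ m := (SS_eq_one hdeg m v₀).symm
  rw [h1]
  calc SS G v₀ m ≤ ∑' t : TT G v₀ m, wgt G ((R2 G v₀ m t).2 : G.Walk v₀ (R2 G v₀ m t).1) :=
        ENNReal.tsum_le_tsum_comp_of_surjective (R2_surj m) _
    _ = ∑' t : TT G v₀ m, wgt G t.2.1.1 * wgt G t.2.2.2.1 := by
        refine tsum_congr fun t => ?_
        show wgt G (t.2.1.1.append t.2.2.2.1) = _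
        rw [wgt_append]
    _ = ∑' k : Fin (m + 1), pk G v₀ (k : ℕ) * aA G v₀ (m - (k : ℕ)) := by
        rw [ENNReal.tsum_sigma']
        refine tsum_congr fun k => ?_
        rw [ENNReal.tsum_prod']
        rw [pk, aA, ← ENNReal.tsum_mul_right]
        refine tsum_congr fun ρ => ?_
        rw [← ENNReal.tsum_mul_left]
    _ = ∑ k ∈ Finset.range (m + 1), pk G v₀ k * aA G v₀ (m - k) := by
        rw [tsum_fintype]
        exact Fin.sum_univ_eq_sum_range (fun k => pk G v₀ k * aA G v₀ (m - k)) (m + 1)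

lemma pksum_le_Q : ∑ k ∈ Finset.range (n + 1), pk G v₀ k ≤ Q G n v₀ v₀ := by
  rw [← Fin.sum_univ_eq_sum_range (fun k => pk G v₀ k) (n + 1), ← tsum_fintype (L := SummationFilter.unconditional _)]
  simp only [pk]
  refine le_trans (le_of_eq (ENNReal.tsum_sigma'
    (fun z : (Σ k : Fin (n + 1), {ρ : G.Walk v₀ v₀ // ρ.length = (k : ℕ)}) =>
      wgt G z.2.1)).symm) ?_
  let e : (Σ k : Fin (n + 1), {ρ : G.Walk v₀ v₀ // ρ.length = (k : ℕ)})
      → {ω : G.Walk v₀ v₀ // ω.length ≤ n} := fun z => ⟨z.2.1, by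
        have := z.2.2; have := z.1.2; omega⟩
  have hinj : Function.Injective e := by
    rintro ⟨k₁, ρ₁, h₁⟩ ⟨k₂, ρ₂, h₂⟩ h
    have hval : ρ₁ = ρ₂ := congrArg Subtype.val h
    subst hval
    have hk : k₁ = k₂ := Fin.ext (by omega)
    subst hk
    rfl
  exact ENNReal.tsum_comp_le_tsum_of_injective hinj (fun z => wgt G z.1)

lemma triangle_le (f g : ℕ → ℝ≥0∞) :
    (∑ m ∈ Finset.range (n + 1), ∑ k ∈ Finset.range (m + 1), f k * g (m - k))
      ≤ (∑ k ∈ Finset.range (n + 1), f k) * (∑ j ∈ Finset.range (n + 1), g j) := by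
  have h1 : ∀ m, (∑ k ∈ Finset.range (m + 1), f k * g (m - k))
      = ∑ ij ∈ Finset.HasAntidiagonal.antidiagonal m, f ij.1 * g ij.2 :=
    fun m => (Finset.Nat.sum_antidiagonal_eq_sum_range_succ (fun a b => f a * g b) m).symm
  simp only [h1]
  rw [← Finset.sum_biUnion (by
    intro a _ b _ hab
    simp only [Finset.disjoint_left]
    intro p hp hq
    rw [Finset.HasAntidiagonal.mem_antidiagonal] at hp hq
    omega)]
  rw [Finset.sum_mul_sum]
  rw [← Finset.sum_product']
  refine Finset.sum_le_sum_of_subset ?_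
  intro p hp
  simp only [Finset.mem_biUnion, Finset.HasAntidiagonal.mem_antidiagonal] at hp
  obtain ⟨m, hm, hsum⟩ := hp
  simp only [Finset.mem_range] at hm
  simp only [Finset.mem_coe, Finset.mem_product, Finset.mem_range]
  omega

end Conv

lemma aA_split {V₀ : Set V} {v₀ : V} (m : ℕ) :
    aA G v₀ m ≤ (∑' u : V, ainsum G V₀ v₀ u m) + aoutsum G V₀ v₀ m := by
  classical
  rw [aA]
  set S : Set (AWT G v₀ m) := {z | ∀ x ∈ z.2.1.support, x ∈ V₀} with hS
  rw [← Summable.tsum_add_tsum_compl (s := S) ENNReal.summable ENNReal.summable]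
  refine add_le_add ?_ ?_
  · have h1 : (∑' u : V, ainsum G V₀ v₀ u m)
        = ∑' z : (Σ u : V, AIn G V₀ v₀ u m), wgt G z.2.1 := by
      rw [ENNReal.tsum_sigma']
      exact tsum_congr fun u => rfl
    rw [h1]
    let e : S → Σ u : V, AIn G V₀ v₀ u m := fun z =>
      ⟨z.1.1, z.1.2.1, z.1.2.2.1, z.2, z.1.2.2.2⟩
    have hinj : Function.Injective e := by
      intro a b h
      apply Subtype.ext
      apply sigma_walk_ext
      exact congrArg (fun w : Σ u : V, AIn G V₀ v₀ u m =>
        (⟨w.1, w.2.1⟩ : Σ u : V, G.Walk v₀ u)) h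
    exact ENNReal.tsum_comp_le_tsum_of_injective hinj (fun z => wgt G z.2.1)
  · rw [aoutsum]
    let e : ↥Sᶜ → AOutT G V₀ v₀ m := fun z =>
      ⟨z.1.1, z.1.2.1, z.1.2.2.1, z.1.2.2.2, z.2⟩
    have hinj : Function.Injective e := by
      intro a b h
      apply Subtype.ext
      apply sigma_walk_ext
      exact congrArg (fun w : AOutT G V₀ v₀ m =>
        (⟨w.1, w.2.1⟩ : Σ u : V, G.Walk v₀ u)) h
    exact ENNReal.tsum_comp_le_tsum_of_injective hinj (fun z => wgt G z.2.1)

lemma closureSet_finite (hfin : V₀.Finite) : (closureSet G V₀).Finite := by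
  refine hfin.union (Set.Finite.subset (hfin.biUnion fun v _ => (G.neighborSet v).toFinite) ?_)
  rintro x ⟨v, hv, hadj⟩
  exact Set.mem_biUnion hv hadj

lemma closureEdges_finite (hfin : V₀.Finite) :
    {e ∈ G.edgeSet | ∀ x ∈ e, x ∈ closureSet G V₀}.Finite := by
  have hW := closureSet_finite (G := G) hfin
  refine Set.Finite.subset ((hW.prod hW).image (fun p => s(p.1, p.2))) ?_
  rintro e ⟨he, hin⟩
  induction e with
  | _ a b =>
    exact ⟨(a, b), ⟨hin a (Sym2.mem_mk_left a b), hin b (Sym2.mem_mk_right a b)⟩, rfl⟩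

lemma degsum_le_closure (hfin : V₀.Finite) :
    (∑ u ∈ hfin.toFinset, G.degree u)
      ≤ 2 * {e ∈ G.edgeSet | ∀ x ∈ e, x ∈ closureSet G V₀}.ncard := by
  classical
  have hsig : (∑ u ∈ hfin.toFinset, G.degree u)
      = (hfin.toFinset.sigma fun u => G.neighborFinset u).card := by
    rw [Finset.card_sigma]
    exact Finset.sum_congr rfl fun u _ => (G.card_neighborFinset_eq_degree u).symm
  rw [hsig]
  have hcard := Finset.card_le_mul_card_image
    (s := hfin.toFinset.sigma fun u => G.neighborFinset u)
    (f := fun p : Σ _ : V, V => s(p.1, p.2)) 2 ?fiber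
  case fiber =>
    intro a _
    induction a with
    | _ c d =>
      refine le_trans (Finset.card_le_card (t := {⟨c, d⟩, ⟨d, c⟩})
        (fun p hp => ?_)) ?_
      · obtain ⟨-, hfp⟩ := Finset.mem_filter.mp hp
        obtain ⟨p1, p2⟩ := p
        simp only [Sym2.eq_iff] at hfp
        rcases hfp with ⟨rfl, rfl⟩ | ⟨rfl, rfl⟩ <;> simp
      · exact le_trans (Finset.card_insert_le _ _) (by simp)
  refine le_trans hcard ?_
  have himg : ((hfin.toFinset.sigma fun u => G.neighborFinset u).image
        (fun p : Σ _ : V, V => s(p.1, p.2)))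
      ⊆ (closureEdges_finite (G := G) hfin).toFinset := by
    intro e he
    obtain ⟨⟨u, x⟩, hp, rfl⟩ := Finset.mem_image.mp he
    obtain ⟨hu, hx⟩ := Finset.mem_sigma.mp hp
    have huV : u ∈ V₀ := hfin.mem_toFinset.mp hu
    have hadj : G.Adj u x := (G.mem_neighborFinset u x).mp hx
    rw [Set.Finite.mem_toFinset]
    refine ⟨G.mem_edgeSet.mpr hadj, ?_⟩
    intro y hy
    rcases Sym2.mem_iff.mp hy with rfl | rfl
    · exact Or.inl huV
    · exact Or.inr ⟨u, huV, hadj⟩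
  calc 2 * _ ≤ 2 * (closureEdges_finite (G := G) hfin).toFinset.card :=
        Nat.mul_le_mul_left 2 (Finset.card_le_card himg)
    _ = _ := by rw [Set.ncard_eq_toFinset_card _ (closureEdges_finite (G := G) hfin)]


end Aux

/-- Lower bound on the cumulative return probability (Theorem 1 of the paper):
`Q(n; v₀, v₀) ≥ σ_{v₀} (2|bar G₀|/(n+1) + C_{G,G₀}(n; v₀))⁻¹` for a finite connected
induced subgraph `G₀` of a connected locally finite graph `G` containing `v₀`. -/
theorem Q_lower_bound (G : SimpleGraph V) [G.LocallyFinite] (hG : G.Connected)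
    (V₀ : Set V) (hfin : V₀.Finite) (hconn : (G.induce V₀).Connected)
    (v₀ : V) (hv₀ : v₀ ∈ V₀) (n : ℕ) (hn : 0 < n) :
    (G.degree v₀ : ℝ≥0∞) *
        (2 * (closureEdgeCount G V₀ : ℝ≥0∞) / ((n : ℝ≥0∞) + 1) + conductance G V₀ n v₀)⁻¹ ≤
      Q G n v₀ v₀ := by
  classical
  by_cases hσ0 : G.degree v₀ = 0
  · simp [hσ0]
  have hdeg : ∀ x : V, 0 < G.degree x := by
    intro x
    by_cases hx : x = v₀
    · subst hx; exact Nat.pos_of_ne_zero hσ0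
    · obtain ⟨p⟩ := hG.preconnected x v₀
      cases p with
      | nil => exact absurd rfl hx
      | cons h q => exact (G.degree_pos_iff_exists_adj x).mpr ⟨_, h⟩
  set σ : ℝ≥0∞ := (G.degree v₀ : ℝ≥0∞) with hσ
  set X : ℝ≥0∞ := cndX G V₀ v₀ n with hX
  set Ec : ℝ≥0∞ := (closureEdgeCount G V₀ : ℝ≥0∞) with hEc
  set N : ℝ≥0∞ := ((n + 1 : ℕ) : ℝ≥0∞) with hNdef
  set q : ℝ≥0∞ := Q G n v₀ v₀ with hq
  have hN0 : N ≠ 0 := by simp [hNdef]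
  have hNt : N ≠ ∞ := by simp [hNdef]
  have hσne : σ ≠ 0 := by simpa [hσ] using hσ0
  have hσt : σ ≠ ∞ := by simp [hσ]
  -- step 1
  have H1 : N ≤ q * ∑ j ∈ Finset.range (n + 1), aA G v₀ j := by
    calc N = ∑ _m ∈ Finset.range (n + 1), (1 : ℝ≥0∞) := by
          rw [Finset.sum_const, Finset.card_range, nsmul_eq_mul, mul_one]
      _ ≤ ∑ m ∈ Finset.range (n + 1),
            ∑ k ∈ Finset.range (m + 1), pk G v₀ k * aA G v₀ (m - k) :=
          Finset.sum_le_sum fun m _ => one_le_conv hdeg m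
      _ ≤ (∑ k ∈ Finset.range (n + 1), pk G v₀ k) * (∑ j ∈ Finset.range (n + 1), aA G v₀ j) :=
          triangle_le _ _
      _ ≤ q * ∑ j ∈ Finset.range (n + 1), aA G v₀ j :=
          mul_le_mul_left pksum_le_Q _
  -- step 2
  have hD2E : (∑ u ∈ hfin.toFinset, (G.degree u : ℝ≥0∞)) ≤ 2 * Ec := by
    have h := degsum_le_closure (G := G) hfin
    have h2 : ((∑ u ∈ hfin.toFinset, G.degree u : ℕ) : ℝ≥0∞)
        ≤ ((2 * closureEdgeCount G V₀ : ℕ) : ℝ≥0∞) := Nat.cast_le.mpr h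
    push_cast at h2
    exact h2
  have H2 : (∑ j ∈ Finset.range (n + 1), aA G v₀ j) ≤ σ⁻¹ * (2 * Ec) + N * X := by
    calc (∑ j ∈ Finset.range (n + 1), aA G v₀ j)
        ≤ ∑ j ∈ Finset.range (n + 1),
            ((∑' u : V, ainsum G V₀ v₀ u j) + aoutsum G V₀ v₀ j) :=
          Finset.sum_le_sum fun j _ => aA_split j
      _ = (∑ j ∈ Finset.range (n + 1), ∑' u : V, ainsum G V₀ v₀ u j)
            + ∑ j ∈ Finset.range (n + 1), aoutsum G V₀ v₀ j := Finset.sum_add_distrib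
      _ ≤ σ⁻¹ * (∑ u ∈ hfin.toFinset, (G.degree u : ℝ≥0∞)) + N * X := by
          refine add_le_add (ain_total hdeg hfin n) ?_
          calc (∑ j ∈ Finset.range (n + 1), aoutsum G V₀ v₀ j)
              ≤ ∑ _j ∈ Finset.range (n + 1), X :=
              Finset.sum_le_sum fun j hj =>
                aoutsum_le hdeg hv₀ (by
                  have := Finset.mem_range.mp hj; omega)
            _ = N * X := by rw [Finset.sum_const, Finset.card_range, nsmul_eq_mul]
      _ ≤ σ⁻¹ * (2 * Ec) + N * X := add_le_add_left (mul_le_mul_right hD2E _) _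
  have HQ : N ≤ q * (σ⁻¹ * (2 * Ec) + N * X) :=
    le_trans H1 (mul_le_mul_right H2 q)
  -- algebra
  have key : σ ≤ q * (2 * Ec / N + σ * X) := by
    calc σ = σ * N⁻¹ * N := by rw [mul_assoc, ENNReal.inv_mul_cancel hN0 hNt, mul_one]
      _ ≤ σ * N⁻¹ * (q * (σ⁻¹ * (2 * Ec) + N * X)) := mul_le_mul_right HQ _
      _ = q * ((σ * σ⁻¹) * (N⁻¹ * (2 * Ec)) + (N⁻¹ * N) * (σ * X)) := by ring
      _ = q * (2 * Ec * N⁻¹ + σ * X) := by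
          rw [ENNReal.mul_inv_cancel hσne hσt, ENNReal.inv_mul_cancel hN0 hNt]
          ring
      _ = q * (2 * Ec / N + σ * X) := by rw [div_eq_mul_inv]
  have hcond : conductance G V₀ n v₀ = σ * X := rfl
  have hNcast : ((n : ℝ≥0∞) + 1) = N := by rw [hNdef]; push_cast; ring
  rw [hcond, hNcast]
  calc σ * (2 * Ec / N + σ * X)⁻¹
      ≤ (q * (2 * Ec / N + σ * X)) * (2 * Ec / N + σ * X)⁻¹ :=
        mul_le_mul_left key _
    _ = q * ((2 * Ec / N + σ * X) * (2 * Ec / N + σ * X)⁻¹) := by rw [mul_assoc]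
    _ ≤ q * 1 := mul_le_mul_right (ENNReal.mul_inv_le_one _) _
    _ = q := mul_one q
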